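/- In particular, in the setting of the previous theorem, the distributionally robust value function is sandwiched: (1/n)Σ_{i=1}^n v_{p̂_i}^π(s) ≥ inf_{μ∈𝔐_α(μ̂_n)} E_{p∼μ}[v_p^π(s)] ≥ (1/n)Σ_{i=1}^n v_{p̂_i}^π(s) - L_{γ,β,R_max}·α, with L_{γ,β,R_max} = βγR_max/(1-γ)². -/

import Mathlib

open MeasureTheory
open scoped BigOperators ENNReal

/-- Transition models of a finite MDP. -/
abbrev Model (S A : Type) : Type := S → A → S → ℝ

/-- `p` is a transition kernel: nonnegative and rows summing to one. -/
def IsKernel {S A : Type} [Fintype S] (p : Model S A) : Prop :=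
  ∀ s a, (∀ s', 0 ≤ p s a s') ∧ ∑ s', p s a s' = 1

/-- 1-Wasserstein distance (w.r.t. the norm `N`) between measures on models. -/
noncomputable def wassDist {S A : Type} [Fintype S] [Fintype A]
    (N : Model S A → ℝ) (μ ν : Measure (Model S A)) : ℝ :=
  sInf {c | ∃ γ : Measure (Model S A × Model S A),
    IsProbabilityMeasure γ ∧ γ.map Prod.fst = μ ∧ γ.map Prod.snd = ν ∧
    c = ∫ q, N (q.1 - q.2) ∂γ}

/-- Empirical distribution `μ̂_n = (1/n) ∑ᵢ δ_{p̂ᵢ}` over transition models. -/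
noncomputable def empiricalM {S A : Type} [Fintype S] [Fintype A]
    (n : ℕ) (phat : Fin n → Model S A) : Measure (Model S A) :=
  ((n : ℝ≥0∞)⁻¹) • ∑ i : Fin n, Measure.dirac (phat i)

section Helpers
variable {S A : Type} [Fintype S] [Fintype A]

lemma N_sum_le {ι : Type*} (N : Model S A → ℝ)
    (hN00 : N 0 = 0) (hNadd : ∀ x y, N (x + y) ≤ N x + N y)
    (t : Finset ι) (f : ι → Model S A) :
    N (∑ i ∈ t, f i) ≤ ∑ i ∈ t, N (f i) := by
  classical
  induction t using Finset.induction with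
  | empty => simp [hN00]
  | @insert a t h ih =>
    rw [Finset.sum_insert h, Finset.sum_insert h]
    exact le_trans (hNadd _ _) (by linarith)

lemma N_nonneg (N : Model S A → ℝ) (hN00 : N 0 = 0)
    (hNadd : ∀ x y, N (x + y) ≤ N x + N y)
    (hNsmul : ∀ (c : ℝ) x, N (c • x) = |c| * N x) (x : Model S A) :
    0 ≤ N x := by
  have h1 : N (-x) = N x := by
    have := hNsmul (-1) x
    simpa using this
  have h2 := hNadd x (-x)
  rw [add_neg_cancel, hN00, h1] at h2
  linarith

lemma N_le_const (N : Model S A → ℝ) (hN00 : N 0 = 0)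
    (hNadd : ∀ x y, N (x + y) ≤ N x + N y)
    (hNsmul : ∀ (c : ℝ) x, N (c • x) = |c| * N x) :
    ∃ C : ℝ, 0 ≤ C ∧ ∀ x : Model S A, N x ≤ C * ‖x‖ := by
  classical
  set e : S → A → S → Model S A := fun s a s' => fun t b t' =>
    if t = s ∧ b = a ∧ t' = s' then (1 : ℝ) else 0 with he
  refine ⟨∑ s : S, ∑ a : A, ∑ s' : S, N (e s a s'),
    Finset.sum_nonneg fun _ _ => Finset.sum_nonneg fun _ _ =>
      Finset.sum_nonneg fun _ _ => N_nonneg N hN00 hNadd hNsmul _, fun x => ?_⟩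
  have hx : x = ∑ s : S, ∑ a : A, ∑ s' : S, x s a s' • e s a s' := by
    funext t b t'
    simp only [Finset.sum_apply, Pi.smul_apply, smul_eq_mul, he, mul_ite, mul_one, mul_zero,
      ite_and]
    simp [Finset.sum_ite_eq]
  calc N x ≤ ∑ s : S, ∑ a : A, ∑ s' : S, N (x s a s' • e s a s') := by
        conv_lhs => rw [hx]
        refine le_trans (N_sum_le N hN00 hNadd _ _) (Finset.sum_le_sum fun s _ => ?_)
        refine le_trans (N_sum_le N hN00 hNadd _ _) (Finset.sum_le_sum fun a _ => ?_)
        exact N_sum_le N hN00 hNadd _ _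
    _ ≤ ∑ s : S, ∑ a : A, ∑ s' : S, ‖x‖ * N (e s a s') := by
        refine Finset.sum_le_sum fun s _ => Finset.sum_le_sum fun a _ =>
          Finset.sum_le_sum fun s' _ => ?_
        rw [hNsmul]
        refine mul_le_mul_of_nonneg_right ?_ (N_nonneg N hN00 hNadd hNsmul _)
        calc |x s a s'| = ‖x s a s'‖ := rfl
          _ ≤ ‖x s a‖ := norm_le_pi_norm (x s a) s'
          _ ≤ ‖x s‖ := norm_le_pi_norm (x s) a
          _ ≤ ‖x‖ := norm_le_pi_norm x s
    _ = (∑ s : S, ∑ a : A, ∑ s' : S, N (e s a s')) * ‖x‖ := by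
        rw [Finset.sum_mul]
        congr 1; funext s
        rw [Finset.sum_mul]
        congr 1; funext a
        rw [Finset.sum_mul]
        congr 1; funext s'
        ring

lemma isClosed_kernels : IsClosed {p : Model S A | IsKernel p} := by
  have h : {p : Model S A | IsKernel p} =
      ⋂ s, ⋂ a, ((⋂ s', {p : Model S A | 0 ≤ p s a s'}) ∩
        {p : Model S A | ∑ s', p s a s' = 1}) := by
    ext p
    simp only [Set.mem_setOf_eq, Set.mem_iInter, Set.mem_inter_iff, IsKernel]
  rw [h]
  have hcont : ∀ (s : S) (a : A) (s' : S), Continuous fun p : Model S A => p s a s' :=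
    fun s a s' => ((continuous_apply s').comp ((continuous_apply a).comp (continuous_apply s)))
  refine isClosed_iInter fun s => isClosed_iInter fun a => IsClosed.inter
    (isClosed_iInter fun s' => isClosed_le continuous_const (hcont s a s')) ?_
  exact isClosed_eq (continuous_finset_sum _ fun s' _ => hcont s a s') continuous_const

lemma kernel_norm_le_one {p : Model S A} (hp : IsKernel p) : ‖p‖ ≤ 1 := by
  rw [pi_norm_le_iff_of_nonneg zero_le_one]
  intro s
  rw [pi_norm_le_iff_of_nonneg zero_le_one]
  intro a
  rw [pi_norm_le_iff_of_nonneg zero_le_one]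
  intro s'
  rw [Real.norm_eq_abs, abs_le]
  constructor
  · linarith [(hp s a).1 s']
  · calc p s a s' ≤ ∑ t, p s a t :=
        Finset.single_le_sum (fun t _ => (hp s a).1 t) (Finset.mem_univ s')
      _ = 1 := (hp s a).2

end Helpers

section ValLemmas
variable {S A : Type} [Fintype S] [Fintype A] [Nonempty S] [Nonempty A]

lemma val_bound (r : S → A → ℝ) (Rmax γ : ℝ)
    (hr : ∀ s a, |r s a| ≤ Rmax) (hγ0 : 0 ≤ γ) (hγ1 : γ < 1)
    (π : S → A) (val : Model S A → S → ℝ)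
    (hval : ∀ p, IsKernel p →
      ∀ s, val p s = r s (π s) + γ * ∑ s', p s (π s) s' * val p s')
    (p : Model S A) (hp : IsKernel p) (s : S) :
    |val p s| ≤ Rmax / (1 - γ) := by
  have h1γ : (0:ℝ) < 1 - γ := by linarith
  set M := Finset.univ.sup' Finset.univ_nonempty (fun s : S => |val p s|) with hM
  have key : ∀ t : S, |val p t| ≤ Rmax + γ * M := by
    intro t
    have hsum : |∑ s', p t (π t) s' * val p s'| ≤ M := by
      calc |∑ s', p t (π t) s' * val p s'| ≤ ∑ s', |p t (π t) s' * val p s'| :=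
            Finset.abs_sum_le_sum_abs _ _
        _ = ∑ s', p t (π t) s' * |val p s'| := by
            refine Finset.sum_congr rfl fun s' _ => ?_
            rw [abs_mul, abs_of_nonneg ((hp t (π t)).1 s')]
        _ ≤ ∑ s', p t (π t) s' * M := by
            refine Finset.sum_le_sum fun s' _ => ?_
            exact mul_le_mul_of_nonneg_left
              (Finset.le_sup' (fun u : S => |val p u|) (Finset.mem_univ s'))
              ((hp t (π t)).1 s')
        _ = M := by rw [← Finset.sum_mul, (hp t (π t)).2, one_mul]
    rw [hval p hp t]
    calc |r t (π t) + γ * ∑ s', p t (π t) s' * val p s'|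
        ≤ |r t (π t)| + |γ * ∑ s', p t (π t) s' * val p s'| := abs_add_le _ _
      _ ≤ Rmax + γ * M := by
          rw [abs_mul, abs_of_nonneg hγ0]
          exact add_le_add (hr t (π t)) (mul_le_mul_of_nonneg_left hsum hγ0)
  have hMle : M ≤ Rmax + γ * M := by
    obtain ⟨t, -, ht⟩ := Finset.exists_mem_eq_sup' Finset.univ_nonempty
      (fun s : S => |val p s|)
    calc M = |val p t| := ht
      _ ≤ Rmax + γ * M := key t
  have hMbound : M ≤ Rmax / (1 - γ) := by
    rw [le_div_iff₀ h1γ]; nlinarith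
  exact le_trans (Finset.le_sup' (fun u : S => |val p u|) (Finset.mem_univ s)) hMbound

lemma val_lip (r : S → A → ℝ) (Rmax γ β : ℝ)
    (hr : ∀ s a, |r s a| ≤ Rmax) (hγ0 : 0 ≤ γ) (hγ1 : γ < 1) (hβ : 0 ≤ β)
    (N : Model S A → ℝ)
    (hN00 : N 0 = 0)
    (hNadd : ∀ x y, N (x + y) ≤ N x + N y)
    (hNsmul : ∀ (c : ℝ) x, N (c • x) = |c| * N x)
    (hβN : ∀ p : Model S A, ∑ s, (⨆ a : A, ∑ s', |p s a s'|) ≤ β * N p)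
    (π : S → A) (val : Model S A → S → ℝ)
    (hval : ∀ p, IsKernel p →
      ∀ s, val p s = r s (π s) + γ * ∑ s', p s (π s) s' * val p s')
    (p q : Model S A) (hp : IsKernel p) (hq : IsKernel q) (s : S) :
    |val p s - val q s| ≤ β * γ * Rmax / (1 - γ) ^ 2 * N (p - q) := by
  have h1γ : (0:ℝ) < 1 - γ := by linarith
  set V := Rmax / (1 - γ) with hV
  have hVb := val_bound r Rmax γ hr hγ0 hγ1 π val hval p hp
  set D := Finset.univ.sup' Finset.univ_nonempty
    (fun s : S => |val p s - val q s|) with hD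
  have hrowsum : ∀ t : S, ∑ s', |(p - q) t (π t) s'| ≤ β * N (p - q) := by
    intro t
    have h1 : ∑ s', |(p - q) t (π t) s'| ≤ ⨆ a : A, ∑ s', |(p - q) t a s'| :=
      le_ciSup (f := fun a : A => ∑ s', |(p - q) t a s'|)
        (Set.Finite.bddAbove (Set.finite_range _)) (π t)
    have h2 : (⨆ a : A, ∑ s', |(p - q) t a s'|) ≤
        ∑ u, ⨆ a : A, ∑ s', |(p - q) u a s'| := by
      refine Finset.single_le_sum (f := fun u : S => ⨆ a : A, ∑ s', |(p - q) u a s'|)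
        (fun u _ => ?_) (Finset.mem_univ t)
      exact le_trans (Finset.sum_nonneg fun s' _ => abs_nonneg _)
        (le_ciSup (f := fun a : A => ∑ s', |(p - q) u a s'|)
          (Set.Finite.bddAbove (Set.finite_range _)) (Classical.arbitrary A))
    exact le_trans h1 (le_trans h2 (hβN _))
  have key : ∀ t : S, |val p t - val q t| ≤ γ * (V * (β * N (p - q))) + γ * D := by
    intro t
    rw [hval p hp t, hval q hq t]
    have hXY : (∑ s', p t (π t) s' * val p s') - ∑ s', q t (π t) s' * val q s' =
        (∑ s', (p t (π t) s' - q t (π t) s') * val p s') +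
          ∑ s', q t (π t) s' * (val p s' - val q s') := by
      rw [← Finset.sum_add_distrib, ← Finset.sum_sub_distrib]
      exact Finset.sum_congr rfl fun s' _ => by ring
    have e1 : |∑ s', (p t (π t) s' - q t (π t) s') * val p s'| ≤ V * (β * N (p - q)) := by
      calc |∑ s', (p t (π t) s' - q t (π t) s') * val p s'|
          ≤ ∑ s', |(p t (π t) s' - q t (π t) s') * val p s'| :=
            Finset.abs_sum_le_sum_abs _ _
        _ ≤ ∑ s', |p t (π t) s' - q t (π t) s'| * V := by
            refine Finset.sum_le_sum fun s' _ => ?_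
            rw [abs_mul]
            exact mul_le_mul_of_nonneg_left (hVb s') (abs_nonneg _)
        _ = (∑ s', |(p - q) t (π t) s'|) * V := by rw [Finset.sum_mul]; rfl
        _ ≤ β * N (p - q) * V := by
            have hV0 : 0 ≤ V := le_trans (abs_nonneg _) (hVb s)
            exact mul_le_mul_of_nonneg_right (hrowsum t) hV0
        _ = V * (β * N (p - q)) := by ring
    have e2 : |∑ s', q t (π t) s' * (val p s' - val q s')| ≤ D := by
      calc |∑ s', q t (π t) s' * (val p s' - val q s')|
          ≤ ∑ s', |q t (π t) s' * (val p s' - val q s')| := Finset.abs_sum_le_sum_abs _ _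
        _ = ∑ s', q t (π t) s' * |val p s' - val q s'| := by
            refine Finset.sum_congr rfl fun s' _ => ?_
            rw [abs_mul, abs_of_nonneg ((hq t (π t)).1 s')]
        _ ≤ ∑ s', q t (π t) s' * D := by
            refine Finset.sum_le_sum fun s' _ => ?_
            exact mul_le_mul_of_nonneg_left
              (Finset.le_sup' (fun u : S => |val p u - val q u|) (Finset.mem_univ s'))
              ((hq t (π t)).1 s')
        _ = D := by rw [← Finset.sum_mul, (hq t (π t)).2, one_mul]
    calc |r t (π t) + γ * ∑ s', p t (π t) s' * val p s' -
          (r t (π t) + γ * ∑ s', q t (π t) s' * val q s')|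
        = γ * |(∑ s', p t (π t) s' * val p s') - ∑ s', q t (π t) s' * val q s'| := by
          rw [show r t (π t) + γ * ∑ s', p t (π t) s' * val p s' -
            (r t (π t) + γ * ∑ s', q t (π t) s' * val q s') =
            γ * ((∑ s', p t (π t) s' * val p s') - ∑ s', q t (π t) s' * val q s') from by ring,
            abs_mul, abs_of_nonneg hγ0]
      _ ≤ γ * (V * (β * N (p - q)) + D) := by
          rw [hXY]
          exact mul_le_mul_of_nonneg_left (le_trans (abs_add_le _ _) (add_le_add e1 e2)) hγ0
      _ = γ * (V * (β * N (p - q))) + γ * D := by ring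
  have hDle : D ≤ γ * (V * (β * N (p - q))) + γ * D := by
    obtain ⟨t, -, ht⟩ := Finset.exists_mem_eq_sup' Finset.univ_nonempty
      (fun s : S => |val p s - val q s|)
    calc D = |val p t - val q t| := ht
      _ ≤ γ * (V * (β * N (p - q))) + γ * D := key t
  have hDbound : D ≤ γ * (V * (β * N (p - q))) / (1 - γ) := by
    rw [le_div_iff₀ h1γ]; nlinarith
  have hfinal : γ * (V * (β * N (p - q))) / (1 - γ) =
      β * γ * Rmax / (1 - γ) ^ 2 * N (p - q) := by
    rw [hV]; field_simp
  exact le_trans (Finset.le_sup' (fun u : S => |val p u - val q u|) (Finset.mem_univ s))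
    (hfinal ▸ hDbound)

end ValLemmas

section Emp
variable {S A : Type} [Fintype S] [Fintype A]

lemma empiricalM_prob {n : ℕ} (hn : 0 < n) (phat : Fin n → Model S A) :
    IsProbabilityMeasure (empiricalM n phat) := by
  constructor
  rw [empiricalM, Measure.smul_apply, Measure.finset_sum_apply]
  simp only [measure_univ, Finset.sum_const, Finset.card_univ, Fintype.card_fin, nsmul_eq_mul,
    mul_one, smul_eq_mul]
  exact ENNReal.inv_mul_cancel (by exact_mod_cast hn.ne') (ENNReal.natCast_ne_top n)

lemma empiricalM_bad {n : ℕ} (phat : Fin n → Model S A)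
    (hphat : ∀ i, IsKernel (phat i)) :
    empiricalM n phat {p : Model S A | ¬ IsKernel p} = 0 := by
  have hmeas : MeasurableSet {p : Model S A | ¬ IsKernel p} :=
    (isClosed_kernels.measurableSet).compl
  rw [empiricalM, Measure.smul_apply, Measure.finset_sum_apply]
  have : ∀ i : Fin n, Measure.dirac (phat i) {p : Model S A | ¬ IsKernel p} = 0 := by
    intro i
    rw [Measure.dirac_apply' _ hmeas]
    simp [Set.indicator, hphat i]
  simp [this]

lemma integrable_dirac' {g : Model S A → ℝ} (hg : Measurable g) (x : Model S A) :
    Integrable g (Measure.dirac x) := by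
  refine ⟨hg.aestronglyMeasurable, ?_⟩
  rw [HasFiniteIntegral, lintegral_dirac' _ (by measurability)]
  exact ENNReal.coe_lt_top

lemma empiricalM_integral {n : ℕ} (hn : 0 < n) (phat : Fin n → Model S A)
    {g : Model S A → ℝ} (hg : Measurable g) :
    ∫ p, g p ∂(empiricalM n phat) = (1 / n : ℝ) * ∑ i : Fin n, g (phat i) := by
  rw [empiricalM, integral_smul_measure,
    integral_finset_sum_measure (fun i _ => integrable_dirac' hg (phat i))]
  have : ∀ i : Fin n, ∫ p, g p ∂(Measure.dirac (phat i)) = g (phat i) := fun i =>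
    integral_dirac' g (phat i) hg.stronglyMeasurable
  rw [Finset.sum_congr rfl fun i _ => this i]
  simp only [smul_eq_mul]
  congr 1
  rw [ENNReal.toReal_inv]
  simp

end Emp

set_option synthInstance.maxHeartbeats 1000000
set_option maxHeartbeats 2000000

instance modelProdBorel {S A : Type} [Fintype S] [Fintype A] :
    BorelSpace (Model S A × Model S A) := by
  haveI : SecondCountableTopologyEither (Model S A) (Model S A) :=
    secondCountableTopologyEither_of_left _ _
  exact Prod.borelSpace

/-- sandwich bound: in the tabular Wasserstein DRMDP setting,
`(1/n) ∑ᵢ v_{p̂ᵢ}^π(s) ≥ inf_{μ ∈ 𝔐_α(μ̂_n)} E_{p∼μ}[v_p^π(s)]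
  ≥ (1/n) ∑ᵢ v_{p̂ᵢ}^π(s) - L_{γ,β,R_max} α`,
with `L_{γ,β,R_max} = β γ R_max / (1-γ)²`. -/
theorem tabular_wdrmdp_sandwich {S A : Type} [Fintype S] [Fintype A]
    [Nonempty S] [Nonempty A]
    (r : S → A → ℝ) (Rmax γ β α : ℝ)
    (hr : ∀ s a, |r s a| ≤ Rmax)
    (hγ0 : 0 ≤ γ) (hγ1 : γ < 1) (hα : 0 ≤ α) (hβ : 0 ≤ β)
    (N : Model S A → ℝ)
    (hN0 : ∀ x, N x = 0 ↔ x = 0)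
    (hNadd : ∀ x y, N (x + y) ≤ N x + N y)
    (hNsmul : ∀ (c : ℝ) x, N (c • x) = |c| * N x)
    (hβN : ∀ p : Model S A, ∑ s, (⨆ a : A, ∑ s', |p s a s'|) ≤ β * N p)
    (π : S → A)
    (val : Model S A → S → ℝ)
    (hval : ∀ p, IsKernel p →
      ∀ s, val p s = r s (π s) + γ * ∑ s', p s (π s) s' * val p s')
    (n : ℕ) (hn : 0 < n)
    (phat : Fin n → Model S A) (hphat : ∀ i, IsKernel (phat i))
    (s : S) :
    (1 / n : ℝ) * (∑ i : Fin n, val (phat i) s) ≥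
      (⨅ μ : {μ : Measure (Model S A) //
          IsProbabilityMeasure μ ∧ μ {p : Model S A | ¬ IsKernel p} = 0 ∧
          wassDist N (empiricalM n phat) μ ≤ α},
        ∫ p, val p s ∂(μ : Measure (Model S A))) ∧
    (⨅ μ : {μ : Measure (Model S A) //
        IsProbabilityMeasure μ ∧ μ {p : Model S A | ¬ IsKernel p} = 0 ∧
        wassDist N (empiricalM n phat) μ ≤ α},
      ∫ p, val p s ∂(μ : Measure (Model S A))) ≥
        (1 / n : ℝ) * (∑ i : Fin n, val (phat i) s) -
          β * γ * Rmax / (1 - γ) ^ 2 * α := by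
  classical
  have h1γ : (0:ℝ) < 1 - γ := by linarith
  have hN00 : N 0 = 0 := (hN0 0).mpr rfl
  have hRmax : 0 ≤ Rmax :=
    le_trans (abs_nonneg _) (hr (Classical.arbitrary S) (Classical.arbitrary A))
  set V := Rmax / (1 - γ) with hV
  have hV0 : 0 ≤ V := div_nonneg hRmax h1γ.le
  set L := β * γ * Rmax / (1 - γ) ^ 2 with hL
  have hL0 : 0 ≤ L :=
    div_nonneg (mul_nonneg (mul_nonneg hβ hγ0) hRmax) (by positivity)
  obtain ⟨C, hC0, hNC⟩ := N_le_const N hN00 hNadd hNsmul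
  have hNlip : ∀ x y : Model S A, |N x - N y| ≤ C * dist x y := by
    intro x y
    rw [dist_eq_norm, abs_sub_le_iff]
    constructor
    · have h := hNadd y (x - y)
      rw [add_sub_cancel] at h
      linarith [hNC (x - y)]
    · have h := hNadd x (y - x)
      rw [add_sub_cancel] at h
      have := hNC (y - x)
      rw [norm_sub_rev] at this
      linarith
  have hNcont : Continuous N :=
    (LipschitzWith.of_dist_le' (K := C) fun x y => by
      rw [Real.dist_eq]; exact hNlip x y).continuous
  set K : Set (Model S A) := {p | IsKernel p} with hKdef
  have hbadset : {p : Model S A | ¬ IsKernel p} = Kᶜ := by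
    rw [hKdef, Set.compl_setOf]
  have hKmeas : MeasurableSet K := isClosed_kernels.measurableSet
  have hbadmeas : MeasurableSet {p : Model S A | ¬ IsKernel p} := by
    rw [hbadset]; exact hKmeas.compl
  -- Lipschitz extension of the value function
  have hlipval : LipschitzOnWith (Real.toNNReal (L * C)) (fun p => val p s) K := by
    apply LipschitzOnWith.of_dist_le'
    intro p hp q hq
    rw [Real.dist_eq]
    calc |val p s - val q s| ≤ L * N (p - q) :=
        val_lip r Rmax γ β hr hγ0 hγ1 hβ N hN00 hNadd hNsmul hβN π val hval p q hp hq s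
      _ ≤ L * (C * ‖p - q‖) := mul_le_mul_of_nonneg_left (hNC _) hL0
      _ = L * C * dist p q := by rw [dist_eq_norm]; ring
  obtain ⟨g, hglip, hgeq⟩ := hlipval.extend_real
  have hgcont : Continuous g := hglip.continuous
  have hgmeas : Measurable g := hgcont.measurable
  have hgval : ∀ p ∈ K, val p s = g p := fun p hp => hgeq hp
  have hgbound : ∀ p ∈ K, |g p| ≤ V := fun p hp => by
    rw [← hgval p hp]
    exact val_bound r Rmax γ hr hγ0 hγ1 π val hval p hp s
  haveI hprob := empiricalM_prob hn phat
  have hbadE := empiricalM_bad phat hphat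
  have hEg : ∫ p, g p ∂(empiricalM n phat) = (1/n : ℝ) * ∑ i : Fin n, val (phat i) s := by
    rw [empiricalM_integral hn phat hgmeas]
    congr 1
    exact Finset.sum_congr rfl fun i _ => (hgval _ (hphat i)).symm
  have hNdiff : Continuous fun q : Model S A × Model S A => N (q.1 - q.2) :=
    hNcont.comp (continuous_fst.sub continuous_snd)
  -- the empirical measure is itself in the ambiguity set
  have hself : wassDist N (empiricalM n phat) (empiricalM n phat) ≤ α := by
    have hdiag : Measurable fun p : Model S A => (p, p) :=
      measurable_id.prodMk measurable_id
    have hmem : (0:ℝ) ∈ {c | ∃ γc : Measure (Model S A × Model S A),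
        IsProbabilityMeasure γc ∧ γc.map Prod.fst = empiricalM n phat ∧
        γc.map Prod.snd = empiricalM n phat ∧ c = ∫ q, N (q.1 - q.2) ∂γc} := by
      refine ⟨(empiricalM n phat).map (fun p => (p, p)), ?_, ?_, ?_, ?_⟩
      · exact Measure.isProbabilityMeasure_map hdiag.aemeasurable
      · rw [Measure.map_map measurable_fst hdiag]
        simp [Function.comp_def]
      · rw [Measure.map_map measurable_snd hdiag]
        simp [Function.comp_def]
      · rw [integral_map hdiag.aemeasurable hNdiff.aestronglyMeasurable]
        simp [hN00]
    have hbdd : BddBelow {c | ∃ γc : Measure (Model S A × Model S A),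
        IsProbabilityMeasure γc ∧ γc.map Prod.fst = empiricalM n phat ∧
        γc.map Prod.snd = empiricalM n phat ∧ c = ∫ q, N (q.1 - q.2) ∂γc} := by
      refine ⟨0, fun c hc => ?_⟩
      obtain ⟨γc, _, _, _, hc⟩ := hc
      rw [hc]
      exact integral_nonneg fun q => N_nonneg N hN00 hNadd hNsmul _
    exact le_trans (csInf_le hbdd hmem) hα
  -- uniform lower bound over the ambiguity set
  have hlow : ∀ μs : {μ : Measure (Model S A) //
      IsProbabilityMeasure μ ∧ μ {p : Model S A | ¬ IsKernel p} = 0 ∧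
      wassDist N (empiricalM n phat) μ ≤ α},
      (1/n : ℝ) * (∑ i : Fin n, val (phat i) s) - L * α ≤
        ∫ p, val p s ∂(μs : Measure (Model S A)) := by
    rintro ⟨μ, hμprob, hμbad, hμdist⟩
    haveI := hμprob
    have hμK : ∀ᵐ p ∂μ, p ∈ K := by
      rw [ae_iff]
      refine measure_mono_null (fun p hp => ?_) hμbad
      simpa [hKdef] using hp
    have hvalg : (fun p => val p s) =ᵐ[μ] g := by
      filter_upwards [hμK] with p hp using hgval p hp
    show _ ≤ ∫ p, val p s ∂μ
    rw [integral_congr_ae hvalg]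
    refine le_of_forall_pos_le_add ?_
    intro δ hδ
    set ε := δ / (L + 1) with hε
    have hε0 : 0 < ε := div_pos hδ (by linarith)
    have hne : Set.Nonempty {c | ∃ γc : Measure (Model S A × Model S A),
        IsProbabilityMeasure γc ∧ γc.map Prod.fst = empiricalM n phat ∧
        γc.map Prod.snd = μ ∧ c = ∫ q, N (q.1 - q.2) ∂γc} := by
      refine ⟨_, (empiricalM n phat).prod μ, inferInstance, ?_, ?_, rfl⟩
      · rw [Measure.map_fst_prod]; simp
      · rw [Measure.map_snd_prod]; simp
    have hlt : wassDist N (empiricalM n phat) μ < α + ε := lt_of_le_of_lt hμdist (by linarith)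
    obtain ⟨c, ⟨γc, hγcprob, hfst, hsnd, hceq⟩, hclt⟩ := exists_lt_of_csInf_lt hne hlt
    haveI := hγcprob
    have hbad1 : ∀ᵐ q ∂γc, q.1 ∈ K := by
      rw [ae_iff]
      have : {q : Model S A × Model S A | ¬ q.1 ∈ K} =
          Prod.fst ⁻¹' {p : Model S A | ¬ IsKernel p} := rfl
      rw [this, ← Measure.map_apply measurable_fst hbadmeas, hfst]
      exact hbadE
    have hbad2 : ∀ᵐ q ∂γc, q.2 ∈ K := by
      rw [ae_iff]
      have : {q : Model S A × Model S A | ¬ q.2 ∈ K} =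
          Prod.snd ⁻¹' {p : Model S A | ¬ IsKernel p} := rfl
      rw [this, ← Measure.map_apply measurable_snd hbadmeas, hsnd]
      exact hμbad
    have hint1 : Integrable (fun q : Model S A × Model S A => g q.1) γc := by
      refine Integrable.mono' (integrable_const V)
        ((hgcont.comp continuous_fst).aestronglyMeasurable) ?_
      filter_upwards [hbad1] with q hq
      rw [Real.norm_eq_abs]
      exact hgbound _ hq
    have hint2 : Integrable (fun q : Model S A × Model S A => g q.2) γc := by
      refine Integrable.mono' (integrable_const V)
        ((hgcont.comp continuous_snd).aestronglyMeasurable) ?_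
      filter_upwards [hbad2] with q hq
      rw [Real.norm_eq_abs]
      exact hgbound _ hq
    have hintN : Integrable (fun q : Model S A × Model S A => N (q.1 - q.2)) γc := by
      refine Integrable.mono' (integrable_const (C * 2)) hNdiff.aestronglyMeasurable ?_
      filter_upwards [hbad1, hbad2] with q h1 h2
      rw [Real.norm_eq_abs, abs_of_nonneg (N_nonneg N hN00 hNadd hNsmul _)]
      have hb1 : ‖(q.1 : Model S A)‖ ≤ 1 := kernel_norm_le_one h1
      have hb2 : ‖(q.2 : Model S A)‖ ≤ 1 := kernel_norm_le_one h2
      calc N (q.1 - q.2) ≤ C * ‖q.1 - q.2‖ := hNC _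
        _ ≤ C * 2 := by
            refine mul_le_mul_of_nonneg_left ?_ hC0
            calc ‖q.1 - q.2‖ ≤ ‖q.1‖ + ‖q.2‖ := norm_sub_le _ _
              _ ≤ 2 := by linarith
    have hptwise : ∀ᵐ q ∂γc, g q.1 - g q.2 ≤ L * N (q.1 - q.2) := by
      filter_upwards [hbad1, hbad2] with q h1 h2
      rw [← hgval _ h1, ← hgval _ h2]
      exact le_trans (le_abs_self _)
        (val_lip r Rmax γ β hr hγ0 hγ1 hβ N hN00 hNadd hNsmul hβN π val hval
          q.1 q.2 h1 h2 s)
    have hI1 : ∫ q, g q.1 ∂γc = (1/n : ℝ) * ∑ i : Fin n, val (phat i) s := by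
      have h := integral_map (μ := γc) measurable_fst.aemeasurable
        (f := g) hgcont.aestronglyMeasurable
      rw [hfst] at h
      exact h.symm.trans hEg
    have hI2 : ∫ q, g q.2 ∂γc = ∫ p, g p ∂μ := by
      rw [← hsnd, integral_map measurable_snd.aemeasurable hgcont.aestronglyMeasurable]
    have hmain : (1/n : ℝ) * (∑ i : Fin n, val (phat i) s) - ∫ p, g p ∂μ ≤ L * c := by
      rw [← hI1, ← hI2, ← integral_sub hint1 hint2]
      calc ∫ q, (g q.1 - g q.2) ∂γc ≤ ∫ q, L * N (q.1 - q.2) ∂γc :=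
          integral_mono_ae (hint1.sub hint2) (hintN.const_mul L) hptwise
        _ = L * c := by rw [integral_const_mul, ← hceq]
    have hLc : L * c ≤ L * α + δ := by
      have h1 : L * c ≤ L * (α + ε) := mul_le_mul_of_nonneg_left hclt.le hL0
      have h2 : L * ε ≤ δ := by
        rw [hε, mul_comm, div_mul_eq_mul_div, div_le_iff₀ (by linarith : (0:ℝ) < L + 1)]
        nlinarith
      nlinarith
    linarith
  haveI hne' : Nonempty {μ : Measure (Model S A) //
      IsProbabilityMeasure μ ∧ μ {p : Model S A | ¬ IsKernel p} = 0 ∧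
      wassDist N (empiricalM n phat) μ ≤ α} :=
    ⟨⟨empiricalM n phat, hprob, hbadE, hself⟩⟩
  constructor
  · have h1 : (⨅ μs : {μ : Measure (Model S A) //
        IsProbabilityMeasure μ ∧ μ {p : Model S A | ¬ IsKernel p} = 0 ∧
        wassDist N (empiricalM n phat) μ ≤ α},
        ∫ p, val p s ∂(μs : Measure (Model S A))) ≤
        ∫ p, val p s ∂(empiricalM n phat) := by
      have hbdd : BddBelow (Set.range fun μs : {μ : Measure (Model S A) //
          IsProbabilityMeasure μ ∧ μ {p : Model S A | ¬ IsKernel p} = 0 ∧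
          wassDist N (empiricalM n phat) μ ≤ α} =>
          ∫ p, val p s ∂(μs : Measure (Model S A))) := by
        refine ⟨(1/n : ℝ) * (∑ i : Fin n, val (phat i) s) - L * α, ?_⟩
        rintro x ⟨μs, rfl⟩
        exact hlow μs
      exact ciInf_le hbdd ⟨empiricalM n phat, hprob, hbadE, hself⟩
    have h2 : ∫ p, val p s ∂(empiricalM n phat) =
        (1/n : ℝ) * ∑ i : Fin n, val (phat i) s := by
      have hμK : ∀ᵐ p ∂(empiricalM n phat), p ∈ K := by
        rw [ae_iff]
        refine measure_mono_null (fun p hp => ?_) hbadE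
        simpa [hKdef] using hp
      have hvalg : (fun p => val p s) =ᵐ[empiricalM n phat] g := by
        filter_upwards [hμK] with p hp using hgval p hp
      rw [integral_congr_ae hvalg, hEg]
    rw [ge_iff_le, ← h2]
    exact h1
  · exact le_ciInf hlow
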